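/- Let m ∈ ℕ with 4 | m, r ∈ ℤ with gcd(r, m) = 1, and set ζ := e(r/m). Let r̿ ∈ {1, −1} with r̿ ≡ r (mod 4). Then for all integers n, n₀ ≥ 0 with n ≡ n₀ (mod m/2), one has ζ^{n(n+1)/2} · (−1)^{2(n−n₀)/m} = ζ^{n₀(n₀+1)/2} · e( (−1)^{m/4 + n₀ + 1} · r̿ · (n − n₀)/(2m) ). (Note that 2(n − n₀)/m is an integer since (m/2) | (n − n₀).) -/

import Mathlib

/-- `e(x) = e^{2πix}`. -/
noncomputable def e (x : ℝ) : ℂ := Complex.exp (2 * Real.pi * Complex.I * x)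

lemma e_add (x y : ℝ) : e (x + y) = e x * e y := by
  simp only [e, ← Complex.exp_add]; push_cast; ring_nf

lemma e_int (z : ℤ) : e z = 1 := by
  have := Complex.exp_int_mul_two_pi_mul_I z
  simpa [e, mul_comm, mul_assoc, mul_left_comm] using this

lemma e_zpow (x : ℝ) (a : ℤ) : e x ^ a = e (a * x) := by
  rw [e, e, ← Complex.exp_int_mul]; push_cast; ring_nf

lemma neg_one_zpow_e (k : ℤ) : (-1 : ℂ) ^ k = e ((k : ℝ) / 2) := by
  have h : (-1 : ℂ) = e (1/2) := by
    rw [e]; push_cast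
    rw [show (2 * ↑Real.pi * Complex.I * (1/2) : ℂ) = ↑Real.pi * Complex.I by ring,
      Complex.exp_pi_mul_I]
  rw [h, e_zpow, mul_one_div]

set_option maxHeartbeats 2000000 in
lemma key4 (k n₀ t r rbb s : ℤ) (hr : (r : ZMod 4) = (rbb : ZMod 4))
    (hrbb : rbb = 1 ∨ rbb = -1)
    (hs : ((t + n₀) % 2 = 1 ∧ s = 1) ∨ ((t + n₀) % 2 = 0 ∧ s = -1)) :
    (4 : ℤ) ∣ k * (r * (2 * n₀ + 1 + 2 * t * k) + 2 - s * rbb) := by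
  have H : ∀ K N T R S : ZMod 4, (R = 1 ∨ R = -1) →
      (((T + N = 1 ∨ T + N = 3) ∧ S = 1) ∨ ((T + N = 0 ∨ T + N = 2) ∧ S = -1)) →
      K * (R * (2 * N + 1 + 2 * T * K) + 2 - S * R) = 0 := by decide
  rw [show (4:ℤ) = ((4:ℕ):ℤ) by norm_num, ← ZMod.intCast_zmod_eq_zero_iff_dvd]
  push_cast
  rw [hr]
  refine H _ _ _ _ _ ?_ ?_
  · rcases hrbb with h | h <;> simp [h]
  · rcases hs with ⟨h1, h2⟩ | ⟨h1, h2⟩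
    · left
      refine ⟨?_, by simp [h2]⟩
      obtain ⟨j, hj⟩ : ∃ j, t + n₀ = 2 * j + 1 := ⟨(t + n₀) / 2, by omega⟩
      have : ((t : ZMod 4) + n₀) = 2 * (j : ZMod 4) + 1 := by
        have := congrArg (Int.cast : ℤ → ZMod 4) hj; push_cast at this ⊢; linear_combination this
      rw [this]
      exact (by decide : ∀ J : ZMod 4, 2*J+1 = 1 ∨ 2*J+1 = 3) _
    · right
      refine ⟨?_, by simp [h2]⟩
      obtain ⟨j, hj⟩ : ∃ j, t + n₀ = 2 * j := ⟨(t + n₀) / 2, by omega⟩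
      have : ((t : ZMod 4) + n₀) = 2 * (j : ZMod 4) := by
        have := congrArg (Int.cast : ℤ → ZMod 4) hj; push_cast at this ⊢; linear_combination this
      rw [this]
      exact (by decide : ∀ J : ZMod 4, 2*J = 0 ∨ 2*J = 2) _

/-- Lemma (part 2): for `4 ∣ m`, `gcd(r,m) = 1`, `ζ = e(r/m)`, `r̿ ∈ {1,−1}` with
`r̿ ≡ r (mod 4)`, and all `n ≡ n₀ (mod m/2)` with `n, n₀ ≥ 0`, one has
`ζ^{n(n+1)/2}·(−1)^{2(n−n₀)/m} = ζ^{n₀(n₀+1)/2}·e((−1)^{m/4+n₀+1}·r̿·(n−n₀)/(2m))`. -/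
theorem zeta_pow_triangular_sign (m : ℕ) (hm : 4 ∣ m) (r : ℤ) (hgcd : Int.gcd r m = 1)
    (ζ : ℂ) (hζ : ζ = e ((r : ℝ) / m))
    (rbb : ℤ) (hrbb : rbb = 1 ∨ rbb = -1) (hrbb4 : rbb % 4 = r % 4)
    (n n₀ : ℤ) (hn : 0 ≤ n) (hn₀ : 0 ≤ n₀) (hcong : ((m / 2 : ℕ) : ℤ) ∣ n - n₀) :
    ζ ^ (n * (n + 1) / 2) * (-1 : ℂ) ^ (2 * (n - n₀) / (m : ℤ)) =
      ζ ^ (n₀ * (n₀ + 1) / 2) *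
        e ((-1 : ℝ) ^ (((m / 4 : ℕ) : ℤ) + n₀ + 1) * (rbb : ℝ) *
            (((n - n₀ : ℤ) : ℝ) / (2 * m))) := by
  subst hζ
  rcases Nat.eq_zero_or_pos m with hm0 | hmpos
  · subst hm0
    have hnn : n = n₀ := by simp at hcong; omega
    subst hnn
    norm_num [e]
  obtain ⟨t, rfl⟩ := hm
  have ht : 0 < t := by omega
  have h2t : ((4 * t / 2 : ℕ) : ℤ) = 2 * t := by push_cast [Nat.mul_div_assoc]; omega
  have h4t : ((4 * t / 4 : ℕ) : ℤ) = t := by push_cast [Nat.mul_div_assoc]; omega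
  rw [h2t] at hcong
  obtain ⟨k, hk⟩ := hcong
  -- triangular numbers
  obtain ⟨a, ha⟩ := Int.even_mul_succ_self n
  obtain ⟨b, hb⟩ := Int.even_mul_succ_self n₀
  have hTn : n * (n + 1) / 2 = a := by omega
  have hTb : n₀ * (n₀ + 1) / 2 = b := by omega
  -- the sign exponent
  have hdiv : 2 * (n - n₀) / ((4 * t : ℕ) : ℤ) = k := by
    push_cast
    rw [hk, show 2 * (2 * (t:ℤ) * k) = (4 * t) * k by ring]
    exact Int.mul_ediv_cancel_left k (by positivity)
  obtain ⟨s, hs1, hsE, hsmod⟩ :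
      ∃ s : ℤ, (s = 1 ∨ s = -1) ∧ (-1 : ℝ) ^ (((4*t / 4 : ℕ) : ℤ) + n₀ + 1) = (s : ℝ) ∧
        (((t:ℤ) + n₀) % 2 = 1 ∧ s = 1 ∨ ((t:ℤ) + n₀) % 2 = 0 ∧ s = -1) := by
    rw [h4t]
    rcases Int.even_or_odd ((t:ℤ) + n₀ + 1) with hpar | hpar
    · exact ⟨1, Or.inl rfl, by rw [Even.neg_one_zpow hpar]; norm_num,
        Or.inl ⟨by rcases hpar with ⟨j, hj⟩; omega, rfl⟩⟩
    · exact ⟨-1, Or.inr rfl, by rw [Odd.neg_one_zpow hpar]; norm_num,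
        Or.inr ⟨by rcases hpar with ⟨j, hj⟩; omega, rfl⟩⟩
  obtain ⟨z, hz⟩ := key4 k n₀ t r rbb s
    (by rw [ZMod.intCast_eq_intCast_iff']; exact hrbb4.symm) hrbb hsmod
  rw [hTn, hTb, hdiv, hsE, e_zpow, e_zpow, neg_one_zpow_e, ← e_add, ← e_add]
  have hR1 : (n:ℝ) * (n + 1) = a + a := by exact_mod_cast congrArg Int.cast ha
  have hR2 : (n₀:ℝ) * (n₀ + 1) = b + b := by exact_mod_cast congrArg Int.cast hb
  have hR3 : (n:ℝ) - n₀ = 2 * t * k := by exact_mod_cast congrArg Int.cast hk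
  have hR4 : (k:ℝ) * (r * (2 * n₀ + 1 + 2 * t * k) + 2 - s * rbb) = 4 * z := by
    exact_mod_cast congrArg Int.cast hz
  have htR : (t:ℝ) ≠ 0 := by positivity
  rw [show (a:ℝ) * (↑r / ↑(4*t)) + ↑k / 2 =
      (↑b * (↑r / ↑(4*t)) + ↑s * ↑rbb * (↑(n - n₀) / (2 * ↑(4*t)))) + (z:ℤ) from ?_,
    e_add, e_int, mul_one]
  push_cast
  field_simp
  linear_combination (-(r:ℝ)) * hR1 + ((r:ℝ)) * hR2 +
    (-(s:ℝ)*(rbb:ℝ) + (r:ℝ)*((n:ℝ)+(n₀:ℝ)+1) + 2*(t:ℝ)*(r:ℝ)*(k:ℝ)) * hR3 +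
    (2*(t:ℝ)) * hR4
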